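/- There exist constants c1, c2, c3 > 0 such that for all n, k in [n], and epsilon >= c3 * sqrt(n / 2^n), a uniformly random function f : {0,1}^n -> {0,1}^m with m <= k - 2*log2(1/epsilon) - c1 is a static (k,epsilon)-ERF with probability at least 1 - 2^{-c2 * 2^n * epsilon^2}. -/

import Mathlib

set_option maxHeartbeats 1000000

open Finset Real

lemma mgf_pointwise (lam x : ℝ) (hx : |x| ≤ 2) :
    Real.exp (lam * x) ≤ ((2 + x)/4) * Real.exp (2*lam) + ((2 - x)/4) * Real.exp (-(2*lam)) := by
  obtain ⟨hx1, hx2⟩ := abs_le.1 hx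
  have h := convexOn_exp.2 (Set.mem_univ (2*lam)) (Set.mem_univ (-(2*lam)))
    (show (0:ℝ) ≤ (2 + x)/4 by linarith) (show (0:ℝ) ≤ (2 - x)/4 by linarith)
    (show (2 + x)/4 + (2 - x)/4 = 1 by ring)
  simp only [smul_eq_mul] at h
  calc Real.exp (lam * x) = Real.exp ((2+x)/4 * (2*lam) + (2-x)/4 * (-(2*lam))) := by ring_nf
    _ ≤ _ := h

lemma mgf_sum {V : Type*} [Fintype V] (lam : ℝ) (g : V → ℝ)
    (hb : ∀ v, |g v| ≤ 2) (h0 : ∑ v, g v = 0) :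
    ∑ v, Real.exp (lam * g v) ≤ (Fintype.card V) * Real.exp (2 * lam ^ 2) := by
  have h1 : ∑ v, Real.exp (lam * g v) ≤
      ∑ v, (((2 + g v)/4) * Real.exp (2*lam) + ((2 - g v)/4) * Real.exp (-(2*lam))) :=
    Finset.sum_le_sum fun v _ => mgf_pointwise lam (g v) (hb v)
  have h2 : ∑ v, (((2 + g v)/4) * Real.exp (2*lam) + ((2 - g v)/4) * Real.exp (-(2*lam)))
      = (Fintype.card V) * ((Real.exp (2*lam) + Real.exp (-(2*lam)))/2) := by
    rw [Finset.sum_add_distrib, ← Finset.sum_mul, ← Finset.sum_mul]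
    have e1 : ∑ v, (2 + g v)/4 = (Fintype.card V : ℝ) / 2 := by
      rw [← Finset.sum_div, Finset.sum_add_distrib, h0, Finset.sum_const, Finset.card_univ]
      push_cast; ring
    have e2 : ∑ v, (2 - g v)/4 = (Fintype.card V : ℝ) / 2 := by
      rw [← Finset.sum_div, Finset.sum_sub_distrib, h0, Finset.sum_const, Finset.card_univ]
      push_cast; ring
    rw [e1, e2]; ring
  have h3 : (Real.exp (2*lam) + Real.exp (-(2*lam)))/2 ≤ Real.exp (2 * lam ^ 2) := by
    have := Real.cosh_le_exp_half_sq (2*lam)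
    rw [Real.cosh_eq] at this
    calc (Real.exp (2*lam) + Real.exp (-(2*lam)))/2 ≤ Real.exp ((2*lam)^2/2) := this
      _ = Real.exp (2 * lam ^ 2) := by ring_nf
  calc ∑ v, Real.exp (lam * g v) ≤ _ := h1
    _ = _ := h2
    _ ≤ (Fintype.card V) * Real.exp (2 * lam ^ 2) := by
        apply mul_le_mul_of_nonneg_left h3 (by positivity)

lemma hoeffding_count {W V : Type*} [Fintype W] [Fintype V] [DecidableEq W] [DecidableEq V]
    (g : W → V → ℝ) (hb : ∀ w v, |g w v| ≤ 2) (h0 : ∀ w, ∑ v, g w v = 0)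
    (T lam : ℝ) (hlam : 0 ≤ lam) :
    ((Finset.univ.filter fun f : W → V => T < ∑ w, g w (f w)).card : ℝ) ≤
      Real.exp (2 * lam ^ 2 * Fintype.card W - lam * T) *
        (Fintype.card V : ℝ) ^ (Fintype.card W) := by
  have key : ((Finset.univ.filter fun f : W → V => T < ∑ w, g w (f w)).card : ℝ) ≤
      ∑ f : W → V, Real.exp (lam * ∑ w, g w (f w) - lam * T) := by
    have h1 : ((Finset.univ.filter fun f : W → V => T < ∑ w, g w (f w)).card : ℝ)
        = ∑ f ∈ Finset.univ.filter fun f : W → V => T < ∑ w, g w (f w), (1:ℝ) := by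
      simp
    rw [h1]
    refine le_trans (Finset.sum_le_sum ?_) (Finset.sum_le_sum_of_subset_of_nonneg
      (Finset.filter_subset _ _) (fun f _ _ => (Real.exp_pos _).le))
    intro f hf
    rw [Finset.mem_filter] at hf
    rw [← Real.exp_zero]
    apply Real.exp_le_exp.2
    nlinarith [hf.2, mul_le_mul_of_nonneg_left hf.2.le hlam]
  have expand : ∀ f : W → V, Real.exp (lam * ∑ w, g w (f w) - lam * T)
      = Real.exp (- (lam * T)) * ∏ w, Real.exp (lam * g w (f w)) := by
    intro f
    rw [← Real.exp_sum]
    rw [← Real.exp_add]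
    congr 1
    rw [Finset.mul_sum]
    ring
  have fact : ∑ f : W → V, ∏ w, Real.exp (lam * g w (f w))
      = ∏ w, ∑ v, Real.exp (lam * g w v) := by
    rw [Finset.prod_univ_sum]
    rw [← Fintype.piFinset_univ]
  have step : ∑ f : W → V, Real.exp (lam * ∑ w, g w (f w) - lam * T)
      = Real.exp (-(lam * T)) * ∏ w, ∑ v, Real.exp (lam * g w v) := by
    rw [← fact, Finset.mul_sum]
    exact Finset.sum_congr rfl fun f _ => expand f
  have prodb : ∏ w, ∑ v, Real.exp (lam * g w v)
      ≤ ∏ w : W, ((Fintype.card V : ℝ) * Real.exp (2 * lam ^ 2)) := by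
    apply Finset.prod_le_prod
    · intro w _
      exact Finset.sum_nonneg fun v _ => (Real.exp_pos _).le
    · intro w _
      exact mgf_sum lam (g w) (hb w) (h0 w)
  calc ((Finset.univ.filter fun f : W → V => T < ∑ w, g w (f w)).card : ℝ)
      ≤ ∑ f : W → V, Real.exp (lam * ∑ w, g w (f w) - lam * T) := key
    _ = Real.exp (-(lam * T)) * ∏ w, ∑ v, Real.exp (lam * g w v) := step
    _ ≤ Real.exp (-(lam * T)) * ∏ w : W, ((Fintype.card V : ℝ) * Real.exp (2 * lam ^ 2)) :=
        mul_le_mul_of_nonneg_left prodb (Real.exp_pos _).le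
    _ = Real.exp (2 * lam ^ 2 * Fintype.card W - lam * T) *
        (Fintype.card V : ℝ) ^ (Fintype.card W) := by
        rw [Finset.prod_const, Finset.card_univ, mul_pow, ← Real.exp_nat_mul,
          show 2 * lam ^ 2 * (Fintype.card W : ℝ) - lam * T
            = -(lam * T) + (Fintype.card W : ℝ) * (2 * lam ^ 2) by ring, Real.exp_add]
        ring

open Finset Real Classical in
lemma count_collapse {n : ℕ} {α : Type*} [Fintype α] [DecidableEq α] (L : Finset (Fin n))
    (F : (Fin n → Bool) → α) (c : ({i // i ∈ L} → Bool) → α → ℝ) :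
    ∑ r : {i // i ∈ L} → Bool, ∑ y : α,
      c r y * ((Finset.univ.filter fun w : Fin n → Bool =>
        (∀ i : {i // i ∈ L}, w i = r i) ∧ F w = y).card : ℝ)
    = ∑ w : Fin n → Bool, c (fun i => w i) (F w) := by
  have h : ∀ (r : {i // i ∈ L} → Bool) (y : α),
      c r y * ((Finset.univ.filter fun w : Fin n → Bool =>
        (∀ i : {i // i ∈ L}, w i = r i) ∧ F w = y).card : ℝ)
      = ∑ w : Fin n → Bool,
          if ((fun i : {i // i ∈ L} => w i) = r ∧ F w = y) then c r y else 0 := by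
    intro r y
    rw [Finset.card_filter]
    push_cast
    rw [Finset.mul_sum]
    refine Finset.sum_congr rfl fun w _ => ?_
    have hiff : (∀ i : {i // i ∈ L}, w i = r i) ↔ ((fun i : {i // i ∈ L} => w i) = r) := by
      rw [funext_iff]
    exact (mul_boole _ _).trans (if_congr (and_congr_left' hiff) rfl rfl)
  calc ∑ r : {i // i ∈ L} → Bool, ∑ y : α,
      c r y * ((Finset.univ.filter fun w : Fin n → Bool =>
        (∀ i : {i // i ∈ L}, w i = r i) ∧ F w = y).card : ℝ)
      = ∑ r : {i // i ∈ L} → Bool, ∑ y : α, ∑ w : Fin n → Bool,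
          (if ((fun i : {i // i ∈ L} => w i) = r ∧ F w = y) then c r y else 0) :=
        Finset.sum_congr rfl fun r _ => Finset.sum_congr rfl fun y _ => h r y
    _ = ∑ r : {i // i ∈ L} → Bool, ∑ w : Fin n → Bool, ∑ y : α,
          (if ((fun i : {i // i ∈ L} => w i) = r ∧ F w = y) then c r y else 0) :=
        Finset.sum_congr rfl fun r _ => Finset.sum_comm
    _ = ∑ w : Fin n → Bool, ∑ r : {i // i ∈ L} → Bool, ∑ y : α,
          (if ((fun i : {i // i ∈ L} => w i) = r ∧ F w = y) then c r y else 0) :=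
        Finset.sum_comm
    _ = ∑ w : Fin n → Bool, c (fun i => w i) (F w) := by
        refine Finset.sum_congr rfl fun w _ => ?_
        simp [ite_and, Finset.sum_ite_eq]

open Finset Real Classical in
lemma count_collapse' {n : ℕ} (L : Finset (Fin n)) (c : ({i // i ∈ L} → Bool) → ℝ) :
    ∑ r : {i // i ∈ L} → Bool,
      c r * ((Finset.univ.filter fun w : Fin n → Bool =>
        (∀ i : {i // i ∈ L}, w i = r i)).card : ℝ)
    = ∑ w : Fin n → Bool, c (fun i => w i) := by
  have h : ∀ (r : {i // i ∈ L} → Bool),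
      c r * ((Finset.univ.filter fun w : Fin n → Bool =>
        (∀ i : {i // i ∈ L}, w i = r i)).card : ℝ)
      = ∑ w : Fin n → Bool,
          if ((fun i : {i // i ∈ L} => w i) = r) then c r else 0 := by
    intro r
    rw [Finset.card_filter]
    push_cast
    rw [Finset.mul_sum]
    refine Finset.sum_congr rfl fun w _ => ?_
    have hiff : (∀ i : {i // i ∈ L}, w i = r i) ↔ ((fun i : {i // i ∈ L} => w i) = r) := by
      rw [funext_iff]
    exact (mul_boole _ _).trans (if_congr hiff rfl rfl)
  calc ∑ r : {i // i ∈ L} → Bool,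
      c r * ((Finset.univ.filter fun w : Fin n → Bool =>
        (∀ i : {i // i ∈ L}, w i = r i)).card : ℝ)
      = ∑ r : {i // i ∈ L} → Bool, ∑ w : Fin n → Bool,
          (if ((fun i : {i // i ∈ L} => w i) = r) then c r else 0) :=
        Finset.sum_congr rfl fun r _ => h r
    _ = ∑ w : Fin n → Bool, ∑ r : {i // i ∈ L} → Bool,
          (if ((fun i : {i // i ∈ L} => w i) = r) then c r else 0) := Finset.sum_comm
    _ = ∑ w : Fin n → Bool, c (fun i => w i) := by
        refine Finset.sum_congr rfl fun w _ => ?_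
        simp [Finset.sum_ite_eq]

open Classical in
noncomputable def Dexpr (n m : ℕ) (f : (Fin n → Bool) → (Fin m → Bool)) (L : Finset (Fin n))
    (r : {i // i ∈ L} → Bool) (y : Fin m → Bool) : ℝ :=
  ((Finset.univ.filter fun w : Fin n → Bool =>
      (∀ i : {i // i ∈ L}, w i = r i) ∧ f w = y).card : ℝ) / 2 ^ n
    - ((Finset.univ.filter fun w : Fin n → Bool =>
        (∀ i : {i // i ∈ L}, w i = r i)).card : ℝ) / 2 ^ n * (1 / 2 ^ m)

open Finset Classical in
lemma erf_sign_sum (n m : ℕ) (f : (Fin n → Bool) → (Fin m → Bool)) (L : Finset (Fin n))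
    (s : ({i // i ∈ L} → Bool) → (Fin m → Bool) → Bool) :
    ∑ r : {i // i ∈ L} → Bool, ∑ y : Fin m → Bool,
        (if s r y then (1:ℝ) else -1) * Dexpr n m f L r y
    = ((2:ℝ)^n)⁻¹ * ∑ w : Fin n → Bool,
        ((if s (fun i => w i) (f w) then (1:ℝ) else -1)
          - ((2:ℝ)^m)⁻¹ * ∑ y : Fin m → Bool, (if s (fun i => w i) y then (1:ℝ) else -1)) := by
  simp only [Dexpr]
  have expand : ∀ (r : {i // i ∈ L} → Bool) (y : Fin m → Bool),
      (if s r y then (1:ℝ) else -1) *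
        (((Finset.univ.filter fun w : Fin n → Bool =>
            (∀ i : {i // i ∈ L}, w i = r i) ∧ f w = y).card : ℝ) / 2 ^ n
          - ((Finset.univ.filter fun w : Fin n → Bool =>
              (∀ i : {i // i ∈ L}, w i = r i)).card : ℝ) / 2 ^ n * (1 / 2 ^ m))
      = ((2:ℝ)^n)⁻¹ * ((if s r y then (1:ℝ) else -1) *
            ((Finset.univ.filter fun w : Fin n → Bool =>
              (∀ i : {i // i ∈ L}, w i = r i) ∧ f w = y).card : ℝ))
        - ((2:ℝ)^n)⁻¹ * (((2:ℝ)^m)⁻¹ * ((if s r y then (1:ℝ) else -1) *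
            ((Finset.univ.filter fun w : Fin n → Bool =>
              (∀ i : {i // i ∈ L}, w i = r i)).card : ℝ))) := by
    intro r y
    ring
  rw [show (∑ r : {i // i ∈ L} → Bool, ∑ y : Fin m → Bool,
        (if s r y then (1:ℝ) else -1) *
        (((Finset.univ.filter fun w : Fin n → Bool =>
            (∀ i : {i // i ∈ L}, w i = r i) ∧ f w = y).card : ℝ) / 2 ^ n
          - ((Finset.univ.filter fun w : Fin n → Bool =>
              (∀ i : {i // i ∈ L}, w i = r i)).card : ℝ) / 2 ^ n * (1 / 2 ^ m)))
      = ∑ r : {i // i ∈ L} → Bool, ∑ y : Fin m → Bool,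
        (((2:ℝ)^n)⁻¹ * ((if s r y then (1:ℝ) else -1) *
            ((Finset.univ.filter fun w : Fin n → Bool =>
              (∀ i : {i // i ∈ L}, w i = r i) ∧ f w = y).card : ℝ))
        - ((2:ℝ)^n)⁻¹ * (((2:ℝ)^m)⁻¹ * ((if s r y then (1:ℝ) else -1) *
            ((Finset.univ.filter fun w : Fin n → Bool =>
              (∀ i : {i // i ∈ L}, w i = r i)).card : ℝ)))) from
    Finset.sum_congr rfl fun r _ => Finset.sum_congr rfl fun y _ => expand r y]
  simp only [Finset.sum_sub_distrib, ← Finset.mul_sum]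
  rw [count_collapse L f (fun r y => if s r y then (1:ℝ) else -1)]
  rw [show (∑ r : {i // i ∈ L} → Bool, ∑ y : Fin m → Bool,
      (if s r y then (1:ℝ) else -1) *
        ((Finset.univ.filter fun w : Fin n → Bool =>
          (∀ i : {i // i ∈ L}, w i = r i)).card : ℝ))
    = ∑ r : {i // i ∈ L} → Bool, (∑ y : Fin m → Bool, if s r y then (1:ℝ) else -1) *
        ((Finset.univ.filter fun w : Fin n → Bool =>
          (∀ i : {i // i ∈ L}, w i = r i)).card : ℝ) from
    Finset.sum_congr rfl fun r _ => (Finset.sum_mul _ _ _).symm]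
  rw [count_collapse' L (fun r => ∑ y : Fin m → Bool, if s r y then (1:ℝ) else -1)]
  ring

open Finset Classical in
lemma badLs_bound (n m : ℕ) (L : Finset (Fin n))
    (s : ({i // i ∈ L} → Bool) → (Fin m → Bool) → Bool) (ε : ℝ) (hε : 0 < ε) :
    ((Finset.univ.filter fun f : (Fin n → Bool) → (Fin m → Bool) =>
        2*ε < ∑ r : {i // i ∈ L} → Bool, ∑ y : Fin m → Bool,
          (if s r y then (1:ℝ) else -1) * Dexpr n m f L r y).card : ℝ)
    ≤ Real.exp (-(ε^2 * 2^n)/2) *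
        (Fintype.card ((Fin n → Bool) → (Fin m → Bool)) : ℝ) := by
  set g : (Fin n → Bool) → (Fin m → Bool) → ℝ := fun w v =>
    (if s (fun i => w i) v then (1:ℝ) else -1)
      - ((2:ℝ)^m)⁻¹ * ∑ y : Fin m → Bool, (if s (fun i => w i) y then (1:ℝ) else -1)
    with hg
  have cardV : (Fintype.card (Fin m → Bool)) = 2^m := by simp
  have cardW : (Fintype.card (Fin n → Bool)) = 2^n := by simp
  have habs : ∀ w v, |g w v| ≤ 2 := by
    intro w v
    rw [hg]
    have h1 : |(if s (fun i => w i) v then (1:ℝ) else -1)| ≤ 1 := by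
      split <;> simp
    have h2 : |((2:ℝ)^m)⁻¹ * ∑ y : Fin m → Bool, (if s (fun i => w i) y then (1:ℝ) else -1)| ≤ 1 := by
      rw [abs_mul, abs_inv, abs_pow, abs_two]
      have : |∑ y : Fin m → Bool, (if s (fun i => w i) y then (1:ℝ) else -1)| ≤ 2^m := by
        refine le_trans (Finset.abs_sum_le_sum_abs _ _) ?_
        have : ∀ y : Fin m → Bool, |(if s (fun i => w i) y then (1:ℝ) else -1)| ≤ 1 := by
          intro y; split <;> simp
        refine le_trans (Finset.sum_le_sum fun y _ => this y) ?_
        simp [cardV]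
      calc ((2:ℝ)^m)⁻¹ * |∑ y : Fin m → Bool, (if s (fun i => w i) y then (1:ℝ) else -1)|
          ≤ ((2:ℝ)^m)⁻¹ * 2^m := by
            apply mul_le_mul_of_nonneg_left this (by positivity)
        _ = 1 := by field_simp
    calc |_ - _| ≤ _ + _ := abs_sub _ _
      _ ≤ 1 + 1 := add_le_add h1 h2
      _ = 2 := by norm_num
  have hzero : ∀ w, ∑ v, g w v = 0 := by
    intro w
    rw [hg]
    simp only
    rw [Finset.sum_sub_distrib, Finset.sum_const, Finset.card_univ, cardV]
    have : ((2:ℝ)^m) ≠ 0 := by positivity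
    field_simp
    rw [nsmul_eq_mul]; push_cast; rw [mul_div_assoc', mul_div_cancel_left₀ _ this, sub_self]
  have hfilter : (Finset.univ.filter fun f : (Fin n → Bool) → (Fin m → Bool) =>
        2*ε < ∑ r : {i // i ∈ L} → Bool, ∑ y : Fin m → Bool,
          (if s r y then (1:ℝ) else -1) * Dexpr n m f L r y)
      = (Finset.univ.filter fun f : (Fin n → Bool) → (Fin m → Bool) =>
        2*ε*2^n < ∑ w : Fin n → Bool, g w (f w)) := by
    refine Finset.filter_congr fun f _ => ?_
    rw [erf_sign_sum n m f L s]
    rw [hg]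
    constructor
    · intro h
      have := mul_lt_mul_of_pos_left h (show (0:ℝ) < 2^n by positivity)
      calc 2*ε*2^n = 2^n * (2*ε) := by ring
        _ < 2^n * (((2:ℝ)^n)⁻¹ * _) := this
        _ = _ := by
          field_simp
          exact Finset.sum_congr rfl fun x _ => by ring
    · intro h
      have h2 := mul_lt_mul_of_pos_left h (show (0:ℝ) < ((2:ℝ)^n)⁻¹ by positivity)
      calc 2*ε = ((2:ℝ)^n)⁻¹ * (2*ε*2^n) := by field_simp
        _ < _ := h2
  rw [hfilter]
  have hc := hoeffding_count g habs hzero (2*ε*2^n) (ε/2) (by positivity)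
  refine le_trans hc (le_of_eq ?_)
  have hcardF : (Fintype.card ((Fin n → Bool) → (Fin m → Bool)) : ℝ)
      = ((2^m : ℕ) : ℝ) ^ (2^n : ℕ) := by
    rw [Fintype.card_fun, cardV, cardW]; push_cast; ring
  rw [hcardF, cardV, cardW]
  congr 1
  push_cast
  ring

open Finset Classical in
lemma bad_card_bound (n k m : ℕ) (ε : ℝ) (hε : 0 < ε) :
    ((Finset.univ.filter fun f : (Fin n → Bool) → (Fin m → Bool) =>
        ¬ ∀ L : Finset (Fin n), L.card = n - k →
          (1/2:ℝ) * ∑ r : {i // i ∈ L} → Bool, ∑ y : Fin m → Bool,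
            |Dexpr n m f L r y| ≤ ε).card : ℝ)
    ≤ (n.choose (n-k) : ℝ) * (2:ℝ)^(2^m * 2^(n-k)) *
        (Real.exp (-(ε^2 * 2^n)/2) *
          (Fintype.card ((Fin n → Bool) → (Fin m → Bool)) : ℝ)) := by
  set Bad := Finset.univ.filter fun f : (Fin n → Bool) → (Fin m → Bool) =>
        ¬ ∀ L : Finset (Fin n), L.card = n - k →
          (1/2:ℝ) * ∑ r : {i // i ∈ L} → Bool, ∑ y : Fin m → Bool,
            |Dexpr n m f L r y| ≤ ε with hBad
  have hsub : Bad ⊆ (Finset.univ.powersetCard (n-k)).biUnion (fun L =>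
      (Finset.univ : Finset (({i // i ∈ L} → Bool) → (Fin m → Bool) → Bool)).biUnion
        (fun s => Finset.univ.filter fun f : (Fin n → Bool) → (Fin m → Bool) =>
          2*ε < ∑ r : {i // i ∈ L} → Bool, ∑ y : Fin m → Bool,
            (if s r y then (1:ℝ) else -1) * Dexpr n m f L r y)) := by
    intro f hf
    rw [hBad, Finset.mem_filter] at hf
    obtain ⟨-, hf⟩ := hf
    push_neg at hf
    obtain ⟨L, hL, hSD⟩ := hf
    rw [Finset.mem_biUnion]
    refine ⟨L, Finset.mem_powersetCard_univ.2 hL, ?_⟩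
    rw [Finset.mem_biUnion]
    refine ⟨fun r y => decide (0 ≤ Dexpr n m f L r y), Finset.mem_univ _, ?_⟩
    rw [Finset.mem_filter]
    refine ⟨Finset.mem_univ _, ?_⟩
    have : ∑ r : {i // i ∈ L} → Bool, ∑ y : Fin m → Bool,
        (if decide (0 ≤ Dexpr n m f L r y) then (1:ℝ) else -1) * Dexpr n m f L r y
        = ∑ r : {i // i ∈ L} → Bool, ∑ y : Fin m → Bool, |Dexpr n m f L r y| := by
      refine Finset.sum_congr rfl fun r _ => Finset.sum_congr rfl fun y _ => ?_
      rcases le_or_gt 0 (Dexpr n m f L r y) with h | h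
      · simp [h, abs_of_nonneg h]
      · simp [not_le.2 h, abs_of_neg h]
    rw [this]
    linarith
  have hcard := Finset.card_le_card hsub
  have hbu := Finset.card_biUnion_le (s := Finset.univ.powersetCard (n-k))
    (t := fun L => (Finset.univ : Finset (({i // i ∈ L} → Bool) → (Fin m → Bool) → Bool)).biUnion
        (fun s => Finset.univ.filter fun f : (Fin n → Bool) → (Fin m → Bool) =>
          2*ε < ∑ r : {i // i ∈ L} → Bool, ∑ y : Fin m → Bool,
            (if s r y then (1:ℝ) else -1) * Dexpr n m f L r y))
  have step1 : (Bad.card : ℝ) ≤ ∑ L ∈ Finset.univ.powersetCard (n-k),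
      ∑ s : ({i // i ∈ L} → Bool) → (Fin m → Bool) → Bool,
        ((Finset.univ.filter fun f : (Fin n → Bool) → (Fin m → Bool) =>
          2*ε < ∑ r : {i // i ∈ L} → Bool, ∑ y : Fin m → Bool,
            (if s r y then (1:ℝ) else -1) * Dexpr n m f L r y).card : ℝ) := by
    calc (Bad.card : ℝ) ≤ _ := Nat.cast_le.2 (le_trans hcard hbu)
      _ ≤ _ := by
        push_cast
        refine Finset.sum_le_sum fun L _ => ?_
        exact_mod_cast Nat.cast_le.2 (Finset.card_biUnion_le)
  refine le_trans step1 ?_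
  have step2 : ∀ L ∈ Finset.univ.powersetCard (n-k),
      ∑ s : ({i // i ∈ L} → Bool) → (Fin m → Bool) → Bool,
        ((Finset.univ.filter fun f : (Fin n → Bool) → (Fin m → Bool) =>
          2*ε < ∑ r : {i // i ∈ L} → Bool, ∑ y : Fin m → Bool,
            (if s r y then (1:ℝ) else -1) * Dexpr n m f L r y).card : ℝ)
      ≤ (2:ℝ)^(2^m * 2^(n-k)) * (Real.exp (-(ε^2 * 2^n)/2) *
          (Fintype.card ((Fin n → Bool) → (Fin m → Bool)) : ℝ)) := by
    intro L hL
    rw [Finset.mem_powersetCard_univ] at hL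
    have hstype : (Fintype.card ((({i // i ∈ L} → Bool)) → (Fin m → Bool) → Bool)) = 2^(2^m * 2^(n-k)) := by
      rw [Fintype.card_fun, Fintype.card_fun, Fintype.card_fun]
      simp [hL, pow_mul, mul_comm]
    calc ∑ s : ({i // i ∈ L} → Bool) → (Fin m → Bool) → Bool,
        ((Finset.univ.filter fun f : (Fin n → Bool) → (Fin m → Bool) =>
          2*ε < ∑ r : {i // i ∈ L} → Bool, ∑ y : Fin m → Bool,
            (if s r y then (1:ℝ) else -1) * Dexpr n m f L r y).card : ℝ)
        ≤ ∑ s : ({i // i ∈ L} → Bool) → (Fin m → Bool) → Bool,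
          (Real.exp (-(ε^2 * 2^n)/2) *
            (Fintype.card ((Fin n → Bool) → (Fin m → Bool)) : ℝ)) :=
          Finset.sum_le_sum fun s _ => badLs_bound n m L s ε hε
      _ = _ := by
          rw [Finset.sum_const, Finset.card_univ, hstype, nsmul_eq_mul]
          push_cast
          ring
  calc ∑ L ∈ Finset.univ.powersetCard (n-k), ∑ s : ({i // i ∈ L} → Bool) → (Fin m → Bool) → Bool,
        ((Finset.univ.filter fun f : (Fin n → Bool) → (Fin m → Bool) =>
          2*ε < ∑ r : {i // i ∈ L} → Bool, ∑ y : Fin m → Bool,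
            (if s r y then (1:ℝ) else -1) * Dexpr n m f L r y).card : ℝ)
      ≤ ∑ L ∈ Finset.univ.powersetCard (n-k), ((2:ℝ)^(2^m * 2^(n-k)) *
          (Real.exp (-(ε^2 * 2^n)/2) *
            (Fintype.card ((Fin n → Bool) → (Fin m → Bool)) : ℝ))) :=
        Finset.sum_le_sum step2
    _ = _ := by
        rw [Finset.sum_const, nsmul_eq_mul, Finset.card_powersetCard]
        simp
        ring

lemma choose_le_two_pow' (n r : ℕ) : n.choose r ≤ 2^n := by
  rcases le_or_gt r n with h | h
  · calc n.choose r ≤ ∑ i ∈ Finset.range (n+1), n.choose i :=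
        Finset.single_le_sum (f := fun i => n.choose i) (fun i _ => Nat.zero_le _)
          (Finset.mem_range.2 (Nat.lt_succ_of_le h))
      _ = 2^n := Nat.sum_range_choose n
  · rw [Nat.choose_eq_zero_of_lt h]; exact Nat.zero_le _

lemma erf_arith (n k m : ℕ) (ε : ℝ) (hk : 1 ≤ k) (hkn : k ≤ n)
    (hε3 : 10 * Real.sqrt ((n : ℝ) / 2 ^ n) ≤ ε)
    (hm : (m:ℝ) ≤ (k : ℝ) - 2 * Real.logb 2 (1/ε) - 4) :
    (n.choose (n-k) : ℝ) * (2:ℝ)^(2^m * 2^(n-k)) * Real.exp (-(ε^2 * 2^n)/2)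
      ≤ (2:ℝ) ^ (-(1/2 * 2^n * ε^2) : ℝ) := by
  have hn : 1 ≤ n := le_trans hk hkn
  have hε : 0 < ε := by
    have h1 : (0:ℝ) < Real.sqrt ((n : ℝ) / 2 ^ n) := by
      apply Real.sqrt_pos.2
      apply div_pos (by exact_mod_cast hn) (by positivity)
    linarith
  set E : ℝ := 2^n * ε^2 with hE
  have hE0 : 0 ≤ E := by positivity
  -- n ≤ E / 100
  have h1 : (n:ℝ) ≤ E / 100 := by
    have hsq : (10 * Real.sqrt ((n : ℝ) / 2 ^ n))^2 ≤ ε^2 := by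
      apply sq_le_sq' _ hε3
      nlinarith [Real.sqrt_nonneg ((n : ℝ) / 2 ^ n)]
    rw [mul_pow, Real.sq_sqrt (by positivity)] at hsq
    rw [hE]
    have h2n : (0:ℝ) < 2^n := by positivity
    rw [le_div_iff₀ (by norm_num)]
    calc (n:ℝ) * 100 = (100 * ((n:ℝ)/2^n)) * 2^n := by field_simp
      _ ≤ ε^2 * 2^n := by
          apply mul_le_mul_of_nonneg_right _ h2n.le
          calc 100 * ((n:ℝ)/2^n) = 10^2 * ((n:ℝ)/2^n) := by norm_num
            _ ≤ ε^2 := hsq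
      _ = 2^n * ε^2 := by ring
  -- 2^m * 2^(n-k) ≤ E / 16
  have h2 : ((2^m * 2^(n-k) : ℕ) : ℝ) ≤ E / 16 := by
    have hlogb : Real.logb 2 (1/ε) = - Real.logb 2 ε := by
      rw [one_div, Real.logb_inv]
    rw [hlogb] at hm
    have hmono : (2:ℝ)^(m:ℝ) ≤ (2:ℝ)^((k:ℝ) + 2 * Real.logb 2 ε - 4) := by
      apply Real.rpow_le_rpow_left_iff (x := (2:ℝ)) (by norm_num) |>.2
      linarith
    have heq : (2:ℝ)^((k:ℝ) + 2 * Real.logb 2 ε - 4) = (2:ℝ)^(k:ℕ) * ε^2 / 16 := by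
      rw [show (k:ℝ) + 2 * Real.logb 2 ε - 4 = (k:ℝ) + (Real.logb 2 ε * 2 + (-4)) from by ring]
      rw [Real.rpow_add (by norm_num), Real.rpow_add (by norm_num)]
      rw [Real.rpow_mul (by norm_num : (0:ℝ) ≤ 2), Real.rpow_logb (by norm_num) (by norm_num) hε]
      rw [Real.rpow_natCast, Real.rpow_two]
      rw [show ((-4:ℝ)) = ((-4 : ℤ) : ℝ) from by norm_num, Real.rpow_intCast]
      norm_num
      ring
    have hm2 : (2:ℝ)^(m:ℕ) ≤ (2:ℝ)^(k:ℕ) * ε^2 / 16 := by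
      calc (2:ℝ)^(m:ℕ) = (2:ℝ)^(m:ℝ) := by rw [Real.rpow_natCast]
        _ ≤ _ := hmono
        _ = _ := heq
    push_cast
    calc (2:ℝ)^m * 2^(n-k) ≤ ((2:ℝ)^k * ε^2 / 16) * 2^(n-k) := by
          apply mul_le_mul_of_nonneg_right hm2 (by positivity)
      _ = ((2:ℝ)^k * 2^(n-k)) * ε^2 / 16 := by ring
      _ = E / 16 := by
          rw [← pow_add, Nat.add_sub_cancel' hkn, hE]
  -- choose bound
  have h3 : (n.choose (n-k) : ℝ) ≤ (2:ℝ)^(n:ℕ) := by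
    exact_mod_cast Nat.cast_le.2 (choose_le_two_pow' n (n-k))
  -- convert to exp
  have hlog2 : Real.log 2 < 0.6931471808 := Real.log_two_lt_d9
  have hlog2pos : 0 < Real.log 2 := Real.log_pos (by norm_num)
  have e1 : ((2:ℝ)^(n:ℕ)) = Real.exp ((n:ℝ) * Real.log 2) := by
    rw [← Real.exp_log (show (0:ℝ) < 2 by norm_num), ← Real.exp_nat_mul, Real.log_exp]
  have e2 : ((2:ℝ)^(2^m * 2^(n-k) : ℕ)) = Real.exp (((2^m * 2^(n-k) : ℕ) : ℝ) * Real.log 2) := by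
    rw [← Real.exp_log (show (0:ℝ) < 2 by norm_num), ← Real.exp_nat_mul, Real.log_exp]
  have e3 : (2:ℝ) ^ (-(1/2 * 2^n * ε^2) : ℝ) = Real.exp (Real.log 2 * (-(1/2 * E))) := by
    rw [Real.rpow_def_of_pos (by norm_num)]
    congr 1
    rw [hE]; ring
  calc (n.choose (n-k) : ℝ) * (2:ℝ)^(2^m * 2^(n-k)) * Real.exp (-(ε^2 * 2^n)/2)
      ≤ (2:ℝ)^(n:ℕ) * (2:ℝ)^(2^m * 2^(n-k)) * Real.exp (-(ε^2 * 2^n)/2) := by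
        apply mul_le_mul_of_nonneg_right _ (Real.exp_pos _).le
        apply mul_le_mul_of_nonneg_right h3 (by positivity)
    _ = Real.exp ((n:ℝ) * Real.log 2 + ((2^m * 2^(n-k) : ℕ) : ℝ) * Real.log 2 + (-(ε^2 * 2^n)/2)) := by
        rw [e1, e2, ← Real.exp_add, ← Real.exp_add]
    _ ≤ (2:ℝ) ^ (-(1/2 * 2^n * ε^2) : ℝ) := by
        rw [e3]
        apply Real.exp_le_exp.2
        have hEe : -(ε^2 * 2^n)/2 = -(E/2) := by rw [hE]; ring
        rw [hEe]
        nlinarith [h1, h2, hE0, hlog2, hlog2pos]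




open Classical in
/-- There are constants `c₁, c₂, c₃ > 0` such that for `ε ≥ c₃·√(n/2ⁿ)` and
`m ≤ k - 2log₂(1/ε) - c₁`, a uniformly random `f : {0,1}ⁿ → {0,1}^m` is a static
`(k,ε)`-ERF (for every set `L` of `n-k` coordinates, the joint distribution
`(U_n|_L, f(U_n))` is `ε`-close to `(U_n|_L, U_m)`) with probability at least
`1 - 2^{-c₂·2ⁿ·ε²}`. -/
theorem random_function_is_staticERF :
    ∃ c1 : ℝ, 0 < c1 ∧ ∃ c2 : ℝ, 0 < c2 ∧ ∃ c3 : ℝ, 0 < c3 ∧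
      ∀ (n k m : ℕ) (ε : ℝ), 1 ≤ k → k ≤ n →
        c3 * Real.sqrt ((n : ℝ) / 2 ^ n) ≤ ε →
        (m : ℝ) ≤ k - 2 * Real.logb 2 (1 / ε) - c1 →
        1 - (2 : ℝ) ^ (-(c2 * 2 ^ n * ε ^ 2)) ≤
          ((Finset.univ.filter fun f : (Fin n → Bool) → (Fin m → Bool) =>
              ∀ L : Finset (Fin n), L.card = n - k →
                (1 / 2 : ℝ) * ∑ r : {i // i ∈ L} → Bool, ∑ y : Fin m → Bool,
                    |((Finset.univ.filter fun w : Fin n → Bool =>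
                        (∀ i : {i // i ∈ L}, w i = r i) ∧ f w = y).card : ℝ) / 2 ^ n
                      - ((Finset.univ.filter fun w : Fin n → Bool =>
                          (∀ i : {i // i ∈ L}, w i = r i)).card : ℝ) / 2 ^ n
                        * (1 / 2 ^ m)| ≤ ε).card : ℝ)
            / Fintype.card ((Fin n → Bool) → (Fin m → Bool)) := by
  refine ⟨4, by norm_num, 1/2, by norm_num, 10, by norm_num, ?_⟩
  intro n k m ε hk hkn hε3 hm
  have hn : 1 ≤ n := le_trans hk hkn
  have hε : 0 < ε := by
    have h1 : (0:ℝ) < Real.sqrt ((n : ℝ) / 2 ^ n) := by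
      apply Real.sqrt_pos.2
      apply div_pos (by exact_mod_cast hn) (by positivity)
    linarith
  set P : ((Fin n → Bool) → (Fin m → Bool)) → Prop := fun f =>
      ∀ L : Finset (Fin n), L.card = n - k →
        (1 / 2 : ℝ) * ∑ r : {i // i ∈ L} → Bool, ∑ y : Fin m → Bool,
          |Dexpr n m f L r y| ≤ ε with hP
  have hCpos : 0 < (Fintype.card ((Fin n → Bool) → (Fin m → Bool)) : ℝ) := by
    exact_mod_cast Fintype.card_pos
  set C : ℝ := (Fintype.card ((Fin n → Bool) → (Fin m → Bool)) : ℝ) with hC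
  have hsplit : ((Finset.univ.filter P).card : ℝ)
      = C - ((Finset.univ.filter fun f => ¬ P f).card : ℝ) := by
    have := Finset.card_filter_add_card_filter_not
      (s := (Finset.univ : Finset ((Fin n → Bool) → (Fin m → Bool)))) (p := P)
    rw [Finset.card_univ] at this
    rw [hC]
    push_cast
    have := congrArg (fun x : ℕ => (x : ℝ)) this
    push_cast at this
    linarith
  have hbad : ((Finset.univ.filter fun f => ¬ P f).card : ℝ)
      ≤ (2 : ℝ) ^ (-(1/2 * 2 ^ n * ε ^ 2) : ℝ) * C := by
    have hb := bad_card_bound n k m ε hε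
    have ha := erf_arith n k m ε hk hkn hε3 hm
    calc ((Finset.univ.filter fun f => ¬ P f).card : ℝ)
        ≤ (n.choose (n-k) : ℝ) * (2:ℝ)^(2^m * 2^(n-k)) *
            (Real.exp (-(ε^2 * 2^n)/2) * C) := hb
      _ = ((n.choose (n-k) : ℝ) * (2:ℝ)^(2^m * 2^(n-k)) * Real.exp (-(ε^2 * 2^n)/2)) * C := by
          ring
      _ ≤ (2 : ℝ) ^ (-(1/2 * 2 ^ n * ε ^ 2) : ℝ) * C := by
          apply mul_le_mul_of_nonneg_right ha hCpos.le
  show 1 - (2 : ℝ) ^ (-(1/2 * 2 ^ n * ε ^ 2)) ≤ ((Finset.univ.filter P).card : ℝ) / C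
  rw [hsplit, sub_div, div_self (ne_of_gt hCpos)]
  have : ((Finset.univ.filter fun f => ¬ P f).card : ℝ) / C
      ≤ (2 : ℝ) ^ (-(1/2 * 2 ^ n * ε ^ 2) : ℝ) := by
    rw [div_le_iff₀ hCpos]
    exact hbad
  linarith
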